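/- Let Ψ = {Ψ_i, i ∈ I} ∈ ℬ, define h(p̄) = p̄^{1+β} / ℐ[Ψ](p̄) with inverse h^{inv}, φ := ℐ[Ψ] ∘ h^{inv}, and Φ_i(x̄) := Ψ_i( (x̄ φ(x̄))^{1/(1+β)} ). Let X : [0,∞) → (0,∞) be any function such that X̄_t := sup_{0≤s≤t} X_s < ∞ for every t ≥ 0. Then there exists a unique function P : [0,∞) → (0,∞) with P̄_t := sup_{0≤s≤t} P_s < ∞ for all t and satisfying P_t^{1+β} = X_t · ℐ[Ψ](P̄_t) for all t ≥ 0, and it is given by P_t = ( X_t · ℐ[Φ](X̄_t) )^{1/(1+β)}. -/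

import Mathlib

open MeasureTheory Filter Set

/-- The left derivative of a real function. -/
noncomputable def leftDeriv (f : ℝ → ℝ) (z : ℝ) : ℝ := derivWithin f (Set.Iio z) z

/-- `f` is a difference of two convex functions on `(0, ∞)`. -/
def IsDCC (f : ℝ → ℝ) : Prop :=
  ∃ f₁ f₂ : ℝ → ℝ, ConvexOn ℝ (Set.Ioi (0:ℝ)) f₁ ∧ ConvexOn ℝ (Set.Ioi (0:ℝ)) f₂ ∧
    ∀ x ∈ Set.Ioi (0:ℝ), f x = f₁ x - f₂ x

/-- Membership in the class ℬ of families of expansion functions. -/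
def MemB {I : Type*} [MeasurableSpace I] (ι : Measure I) (α lam : I → ℝ)
    (𝒳 : I → ℝ → ℝ) : Prop :=
  Measurable (fun p : ℝ × I => 𝒳 p.2 p.1) ∧
  (∀ z > (0:ℝ), Integrable (fun i => lam i * (𝒳 i z) ^ (α i)) ι) ∧
  ∀ i, (∀ z > (0:ℝ), 0 < 𝒳 i z) ∧ IsDCC (𝒳 i) ∧
    Tendsto (𝒳 i) (nhdsWithin (0:ℝ) (Set.Ioi (0:ℝ))) (nhds 0) ∧
    Tendsto (𝒳 i) atTop atTop ∧
    ∀ z > (0:ℝ), 0 < leftDeriv (𝒳 i) z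

/-- The operator ℐ applied to a family 𝒳 ∈ ℬ:
`ℐ[𝒳](z) = ((1+β) ∫ λᵢ max(cᵢ^{αᵢ}, 𝒳ᵢ(z)^{αᵢ}) ι(di))^{-γ}`. -/
noncomputable def Iop {I : Type*} [MeasurableSpace I] (ι : Measure I) (β γ : ℝ)
    (c α lam : I → ℝ) (𝒳 : I → ℝ → ℝ) (z : ℝ) : ℝ :=
  ((1 + β) * ∫ i, lam i * max ((c i) ^ (α i)) ((𝒳 i z) ^ (α i)) ∂ι) ^ (-γ)

/-- With Ψ ∈ ℬ, h, hinv, φ and Φ as in Theorem 5.2, let X : [0,∞) → (0,∞)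
be any function whose running supremum X̄ is finite.  Then there is a unique positive
function P on [0,∞) with finite running supremum P̄ satisfying
P_t^{1+β} = X_t ℐ[Ψ](P̄_t) for all t ≥ 0, namely P_t = (X_t ℐ[Φ](X̄_t))^{1/(1+β)}. -/
lemma IsDCC.continuousOn {f : ℝ → ℝ} (hf : IsDCC f) : ContinuousOn f (Set.Ioi 0) := by
  obtain ⟨f₁, f₂, h₁, h₂, heq⟩ := hf
  exact ((h₁.continuousOn isOpen_Ioi).sub (h₂.continuousOn isOpen_Ioi)).congr heq

lemma monotoneOn_of_leftDeriv_pos {f : ℝ → ℝ} (hc : ContinuousOn f (Set.Ioi 0))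
    (hd : ∀ z > (0:ℝ), 0 < leftDeriv f z) : MonotoneOn f (Set.Ioi (0:ℝ)) := by
  intro a ha b hb hab
  rcases eq_or_lt_of_le hab with rfl | hab
  · exact le_rfl
  have hsub : Set.Icc a b ⊆ Set.Ioi (0:ℝ) := fun x hx => lt_of_lt_of_le ha hx.1
  obtain ⟨cmin, hcmem, hcm⟩ := isCompact_Icc.exists_isMinOn (Set.nonempty_Icc.2 hab.le)
    (hc.mono hsub)
  have hceq : cmin = a := by
    by_contra hne
    have hac : a < cmin := lt_of_le_of_ne hcmem.1 (Ne.symm hne)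
    have hcpos : (0:ℝ) < cmin := lt_trans ha hac
    have hdc := hd cmin hcpos
    have hdiff : DifferentiableWithinAt ℝ f (Set.Iio cmin) cmin := by
      by_contra hnd
      rw [leftDeriv, derivWithin_zero_of_not_differentiableWithinAt hnd] at hdc
      exact lt_irrefl _ hdc
    have hder : HasDerivWithinAt f (leftDeriv f cmin) (Set.Iio cmin) cmin :=
      hdiff.hasDerivWithinAt
    have hslope : Tendsto (slope f cmin) (nhdsWithin cmin (Set.Iio cmin \ {cmin}))
        (nhds (leftDeriv f cmin)) := hasDerivWithinAt_iff_tendsto_slope.mp hder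
    have hds : Set.Iio cmin \ {cmin} = Set.Iio cmin := by
      apply Set.diff_singleton_eq_self; simp
    rw [hds] at hslope
    have hev1 : ∀ᶠ y in nhdsWithin cmin (Set.Iio cmin), 0 < slope f cmin y :=
      hslope.eventually (eventually_gt_nhds hdc)
    have hev2 : ∀ᶠ y in nhdsWithin cmin (Set.Iio cmin), y ∈ Set.Ioi a :=
      eventually_mem_set.mpr (mem_nhdsWithin_of_mem_nhds (Ioi_mem_nhds hac))
    have hev3 : ∀ᶠ y in nhdsWithin cmin (Set.Iio cmin), y ∈ Set.Iio cmin :=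
      eventually_mem_nhdsWithin
    obtain ⟨y, hy1, hy2, hy3⟩ := (hev1.and (hev2.and hev3)).exists
    have hylt : y < cmin := hy3
    have : f y - f cmin < 0 := by
      have := hy1
      rw [slope_def_field] at this
      have hden : y - cmin < 0 := by linarith
      rw [div_pos_iff] at this
      rcases this with ⟨h1, h2⟩ | ⟨h1, h2⟩
      · linarith
      · linarith
    have hymem : y ∈ Set.Icc a b := ⟨le_of_lt hy2, le_trans hylt.le hcmem.2⟩
    have := hcm hymem
    simp only [Set.mem_setOf_eq] at this
    linarith
  have := hcm (Set.right_mem_Icc.mpr hab.le)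
  simp only [Set.mem_setOf_eq] at this
  rw [hceq] at this
  exact this

lemma sup_rpow_helper {S : Set ℝ} (hS : S.Nonempty) (hbdd : BddAbove S) {k e : ℝ}
    (hk : 0 ≤ k) (he : 0 ≤ e) :
    (max (sSup S) 0 * k) ^ e = sSup ((fun y => (max y 0 * k) ^ e) '' S) := by
  refine Monotone.map_csSup_of_continuousAt (f := fun y : ℝ => (max y 0 * k) ^ e) ?_ ?_ hS hbdd
  · exact (((continuous_id.max continuous_const).mul continuous_const).rpow_const
      (fun x => Or.inr he)).continuousAt
  · intro y₁ y₂ hy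
    exact Real.rpow_le_rpow (by positivity)
      (mul_le_mul_of_nonneg_right (max_le_max hy le_rfl) hk) he

theorem statement6
    {I : Type*} [MeasurableSpace I] (ι : Measure I) [SigmaFinite ι]
    (β γ : ℝ) (hβ : 0 < β) (hγ : γ ∈ Set.Ioo (0:ℝ) 1)
    (c α lam : I → ℝ) (hcm : Measurable c) (hαm : Measurable α) (hlamm : Measurable lam)
    (hcpos : ∀ i, 0 < c i) (hαmem : ∀ i, α i ∈ Set.Ioo (0:ℝ) 1) (hlampos : ∀ i, 0 < lam i)
    (hκint : Integrable (fun i => lam i * (c i) ^ (α i)) ι)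
    (hκpos : 0 < ∫ i, lam i * (c i) ^ (α i) ∂ι)
    (Ψ : I → ℝ → ℝ) (hΨ : MemB ι α lam Ψ)
    (h : ℝ → ℝ)
    (hh : ∀ p > (0:ℝ), h p = p ^ (1 + β) / Iop ι β γ c α lam Ψ p)
    (hinv : ℝ → ℝ)
    (hinv_left : ∀ p > (0:ℝ), hinv (h p) = p)
    (hinv_right : ∀ x > (0:ℝ), 0 < hinv x ∧ h (hinv x) = x)
    (φ : ℝ → ℝ) (hφ : ∀ x > (0:ℝ), φ x = Iop ι β γ c α lam Ψ (hinv x))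
    (Φ : I → ℝ → ℝ)
    (hΦ : ∀ i, ∀ x > (0:ℝ), Φ i x = Ψ i ((x * φ x) ^ (1 / (1 + β))))
    (X : ℝ → ℝ)
    (hXpos : ∀ t, 0 ≤ t → 0 < X t)
    (hXbdd : ∀ t, 0 ≤ t → BddAbove (X '' Set.Icc 0 t))
    (Pstar : ℝ → ℝ)
    (hPstar : ∀ t, 0 ≤ t →
      Pstar t = (X t * Iop ι β γ c α lam Φ (sSup (X '' Set.Icc 0 t))) ^ (1 / (1 + β))) :
    (∀ t, 0 ≤ t → 0 < Pstar t) ∧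
    (∀ t, 0 ≤ t → BddAbove (Pstar '' Set.Icc 0 t)) ∧
    (∀ t, 0 ≤ t →
      (Pstar t) ^ (1 + β) = X t * Iop ι β γ c α lam Ψ (sSup (Pstar '' Set.Icc 0 t))) ∧
    ∀ P : ℝ → ℝ,
      (∀ t, 0 ≤ t → 0 < P t) →
      (∀ t, 0 ≤ t → BddAbove (P '' Set.Icc 0 t)) →
      (∀ t, 0 ≤ t →
        (P t) ^ (1 + β) = X t * Iop ι β γ c α lam Ψ (sSup (P '' Set.Icc 0 t))) →
      ∀ t, 0 ≤ t → P t = Pstar t := by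
  obtain ⟨hγ0, hγ1⟩ := hγ
  have h1β : (0:ℝ) < 1 + β := by linarith
  -- basic facts about Ψ
  have hΨpos : ∀ i, ∀ z > (0:ℝ), 0 < Ψ i z := fun i => (hΨ.2.2 i).1
  have hΨmono : ∀ i, MonotoneOn (Ψ i) (Set.Ioi 0) := fun i =>
    monotoneOn_of_leftDeriv_pos ((hΨ.2.2 i).2.1.continuousOn) ((hΨ.2.2 i).2.2.2.2)
  have hmeasΨ : ∀ z : ℝ, Measurable fun i => Ψ i z := fun z =>
    hΨ.1.comp (measurable_const.prodMk measurable_id)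
  -- integrability of the integrand of Iop
  have hint : ∀ z > (0:ℝ),
      Integrable (fun i => lam i * max (c i ^ α i) (Ψ i z ^ α i)) ι := by
    intro z hz
    have hFm : Measurable fun i => lam i * max (c i ^ α i) (Ψ i z ^ α i) := by
      have h1 := hmeasΨ z
      measurability
    refine (hκint.add (hΨ.2.1 z hz)).mono' hFm.aestronglyMeasurable ?_
    filter_upwards with i
    simp only [Pi.add_apply, Real.norm_eq_abs]
    have h1 : (0:ℝ) < c i ^ α i := Real.rpow_pos_of_pos (hcpos i) _
    have h2 : (0:ℝ) < Ψ i z ^ α i := Real.rpow_pos_of_pos (hΨpos i z hz) _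
    have hmax0 : (0:ℝ) ≤ max (c i ^ α i) (Ψ i z ^ α i) := le_trans h1.le (le_max_left _ _)
    rw [abs_of_nonneg (mul_nonneg (hlampos i).le hmax0)]
    calc lam i * max (c i ^ α i) (Ψ i z ^ α i)
        ≤ lam i * (c i ^ α i + Ψ i z ^ α i) :=
          mul_le_mul_of_nonneg_left (max_le (by linarith) (by linarith)) (hlampos i).le
      _ = lam i * c i ^ α i + lam i * Ψ i z ^ α i := mul_add _ _ _
  -- positivity and monotonicity of the integral
  have hApos : ∀ z > (0:ℝ),
      0 < (1 + β) * ∫ i, lam i * max (c i ^ α i) (Ψ i z ^ α i) ∂ι := by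
    intro z hz
    refine mul_pos h1β (lt_of_lt_of_le hκpos (integral_mono hκint (hint z hz) fun i => ?_))
    exact mul_le_mul_of_nonneg_left (le_max_left _ _) (hlampos i).le
  have hIpos : ∀ z > (0:ℝ), 0 < Iop ι β γ c α lam Ψ z := fun z hz =>
    Real.rpow_pos_of_pos (hApos z hz) _
  have hIanti : ∀ z₁ z₂, 0 < z₁ → z₁ ≤ z₂ →
      Iop ι β γ c α lam Ψ z₂ ≤ Iop ι β γ c α lam Ψ z₁ := by
    intro z₁ z₂ h1 h12
    have h2 : (0:ℝ) < z₂ := lt_of_lt_of_le h1 h12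
    refine Real.rpow_le_rpow_of_nonpos (hApos z₁ h1) (mul_le_mul_of_nonneg_left
      (integral_mono (hint z₁ h1) (hint z₂ h2) fun i => ?_) h1β.le) (neg_nonpos.mpr hγ0.le)
    refine mul_le_mul_of_nonneg_left (max_le_max le_rfl
      (Real.rpow_le_rpow (hΨpos i z₁ h1).le (hΨmono i h1 h2 h12) (hαmem i).1.le))
      (hlampos i).le
  -- h is positive and monotone on the positive reals
  have hhpos : ∀ p > (0:ℝ), 0 < h p := by
    intro p hp
    rw [hh p hp]
    exact div_pos (Real.rpow_pos_of_pos hp _) (hIpos p hp)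
  have hhmono : ∀ p q : ℝ, 0 < p → p ≤ q → h p ≤ h q := by
    intro p q hp hpq
    have hq : (0:ℝ) < q := lt_of_lt_of_le hp hpq
    rw [hh p hp, hh q hq]
    exact div_le_div₀ (Real.rpow_nonneg hq.le _) (Real.rpow_le_rpow hp.le hpq h1β.le)
      (hIpos q hq) (hIanti p q hp hpq)
  -- hinv is monotone on the positive reals
  have hinvmono : ∀ x y : ℝ, 0 < x → x ≤ y → hinv x ≤ hinv y := by
    intro x y hx hxy
    by_contra hlt
    push_neg at hlt
    have hy : (0:ℝ) < y := lt_of_lt_of_le hx hxy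
    have h1 := hinv_right x hx
    have h2 := hinv_right y hy
    have hle : y ≤ x := by
      have := hhmono _ _ h2.1 hlt.le
      rwa [h1.2, h2.2] at this
    have hxy' : x = y := le_antisymm hxy hle
    rw [hxy'] at hlt
    exact lt_irrefl _ hlt
  -- key identity for hinv
  have hinv_pow : ∀ x > (0:ℝ), hinv x ^ (1 + β) = x * φ x := by
    intro x hx
    obtain ⟨hpos, heq⟩ := hinv_right x hx
    rw [hφ x hx]
    rw [hh (hinv x) hpos, div_eq_iff (hIpos _ hpos).ne'] at heq
    exact heq
  have hinv_eq : ∀ x > (0:ℝ), hinv x = (x * φ x) ^ (1 / (1 + β)) := by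
    intro x hx
    rw [← hinv_pow x hx, one_div, Real.rpow_rpow_inv (hinv_right x hx).1.le h1β.ne']
  have hφpos : ∀ x > (0:ℝ), 0 < φ x := by
    intro x hx
    rw [hφ x hx]
    exact hIpos _ (hinv_right x hx).1
  have hφanti : ∀ x y : ℝ, 0 < x → x ≤ y → φ y ≤ φ x := by
    intro x y hx hxy
    have hy : (0:ℝ) < y := lt_of_lt_of_le hx hxy
    rw [hφ x hx, hφ y hy]
    exact hIanti _ _ (hinv_right x hx).1 (hinvmono x y hx hxy)
  -- Iop of Φ
  have hIΦ : ∀ x > (0:ℝ), Iop ι β γ c α lam Φ x = Iop ι β γ c α lam Ψ (hinv x) := by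
    intro x hx
    have hkey : ∀ i, Φ i x = Ψ i (hinv x) := fun i => by
      rw [hΦ i x hx, ← hinv_eq x hx]
    simp only [Iop, hkey]
  -- running supremum of X
  have hXne : ∀ t : ℝ, 0 ≤ t → (X '' Set.Icc 0 t).Nonempty := fun t ht =>
    (Set.nonempty_Icc.mpr ht).image X
  have hXle : ∀ s t : ℝ, 0 ≤ s → s ≤ t → X s ≤ sSup (X '' Set.Icc 0 t) := fun s t hs hst =>
    le_csSup (hXbdd t (le_trans hs hst)) ⟨s, ⟨hs, hst⟩, rfl⟩
  have hXbarpos : ∀ t : ℝ, 0 ≤ t → 0 < sSup (X '' Set.Icc 0 t) := fun t ht =>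
    lt_of_lt_of_le (hXpos t ht) (hXle t t ht le_rfl)
  have hXbarmono : ∀ s t : ℝ, 0 ≤ s → s ≤ t →
      sSup (X '' Set.Icc 0 s) ≤ sSup (X '' Set.Icc 0 t) := fun s t hs hst =>
    csSup_le_csSup (hXbdd t (le_trans hs hst)) (hXne s hs)
      (Set.image_mono (Set.Icc_subset_Icc_right hst))
  -- formula for Pstar via φ
  have hPformula : ∀ t : ℝ, 0 ≤ t →
      Pstar t = (X t * φ (sSup (X '' Set.Icc 0 t))) ^ (1 / (1 + β)) := by
    intro t ht
    rw [hPstar t ht, hIΦ _ (hXbarpos t ht), ← hφ _ (hXbarpos t ht)]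
  have hPstarpos : ∀ t : ℝ, 0 ≤ t → 0 < Pstar t := by
    intro t ht
    rw [hPformula t ht]
    exact Real.rpow_pos_of_pos (mul_pos (hXpos t ht) (hφpos _ (hXbarpos t ht))) _
  -- upper bound on Pstar
  have hPstarle : ∀ s t : ℝ, 0 ≤ s → s ≤ t →
      Pstar s ≤ hinv (sSup (X '' Set.Icc 0 t)) := by
    intro s t hs hst
    have hXs := hXbarpos s hs
    calc Pstar s = (X s * φ (sSup (X '' Set.Icc 0 s))) ^ (1 / (1 + β)) := hPformula s hs
      _ ≤ (sSup (X '' Set.Icc 0 s) * φ (sSup (X '' Set.Icc 0 s))) ^ (1 / (1 + β)) :=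
          Real.rpow_le_rpow (mul_nonneg (hXpos s hs).le (hφpos _ hXs).le)
            (mul_le_mul_of_nonneg_right (hXle s s hs le_rfl) (hφpos _ hXs).le)
            (by positivity)
      _ = hinv (sSup (X '' Set.Icc 0 s)) := (hinv_eq _ hXs).symm
      _ ≤ hinv (sSup (X '' Set.Icc 0 t)) := hinvmono _ _ hXs (hXbarmono s t hs hst)
  have hPstarbdd : ∀ t : ℝ, 0 ≤ t → BddAbove (Pstar '' Set.Icc 0 t) := by
    intro t ht
    refine ⟨hinv (sSup (X '' Set.Icc 0 t)), ?_⟩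
    rintro _ ⟨s, hs, rfl⟩
    exact hPstarle s t hs.1 hs.2
  -- the general sup-lowerbound lemma: for any Q dominating (X s * k)^{1/(1+β)} pointwise
  have hsuplb : ∀ t : ℝ, 0 ≤ t → ∀ k : ℝ, 0 < k → ∀ M : ℝ,
      (∀ s, 0 ≤ s → s ≤ t → (X s * k) ^ (1 / (1 + β)) ≤ M) →
      (sSup (X '' Set.Icc 0 t) * k) ^ (1 / (1 + β)) ≤ M := by
    intro t ht k hk M hM
    have hmax : max (sSup (X '' Set.Icc 0 t)) 0 = sSup (X '' Set.Icc 0 t) :=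
      max_eq_left (hXbarpos t ht).le
    have heq := sup_rpow_helper (hXne t ht) (hXbdd t ht) (k := k)
      (e := 1 / (1 + β)) hk.le (by positivity)
    rw [hmax] at heq
    rw [heq]
    refine csSup_le ((hXne t ht).image _) ?_
    rintro _ ⟨_, ⟨s, hs, rfl⟩, rfl⟩
    simpa [max_eq_left (hXpos s hs.1).le] using hM s hs.1 hs.2
  -- the running supremum of Pstar is hinv of the running supremum of X
  have hPstarbar : ∀ t : ℝ, 0 ≤ t →
      sSup (Pstar '' Set.Icc 0 t) = hinv (sSup (X '' Set.Icc 0 t)) := by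
    intro t ht
    refine le_antisymm (csSup_le ((Set.nonempty_Icc.mpr ht).image Pstar) ?_) ?_
    · rintro _ ⟨s, hs, rfl⟩
      exact hPstarle s t hs.1 hs.2
    · rw [hinv_eq _ (hXbarpos t ht), hφ _ (hXbarpos t ht)]
      set k := Iop ι β γ c α lam Ψ (hinv (sSup (X '' Set.Icc 0 t))) with hk
      have hkpos : 0 < k := hIpos _ (hinv_right _ (hXbarpos t ht)).1
      refine hsuplb t ht k hkpos _ ?_
      intro s hs hst
      have hXs := hXbarpos s hs
      calc (X s * k) ^ (1 / (1 + β))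
          ≤ (X s * φ (sSup (X '' Set.Icc 0 s))) ^ (1 / (1 + β)) := by
            refine Real.rpow_le_rpow (mul_nonneg (hXpos s hs).le hkpos.le)
              (mul_le_mul_of_nonneg_left ?_ (hXpos s hs).le) (by positivity)
            rw [hk, ← hφ _ (hXbarpos t (le_trans hs hst))]
            exact hφanti _ _ hXs (hXbarmono s t hs hst)
        _ = Pstar s := (hPformula s hs).symm
        _ ≤ sSup (Pstar '' Set.Icc 0 t) :=
            le_csSup (hPstarbdd t (le_trans hs hst)) ⟨s, ⟨hs, hst⟩, rfl⟩
  -- Pstar satisfies the equation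
  have hPstarsat : ∀ t : ℝ, 0 ≤ t → (Pstar t) ^ (1 + β) =
      X t * Iop ι β γ c α lam Ψ (sSup (Pstar '' Set.Icc 0 t)) := by
    intro t ht
    rw [hPstarbar t ht, hPformula t ht, one_div,
      Real.rpow_inv_rpow (mul_nonneg (hXpos t ht).le (hφpos _ (hXbarpos t ht)).le) h1β.ne',
      hφ _ (hXbarpos t ht)]
  refine ⟨hPstarpos, hPstarbdd, hPstarsat, ?_⟩
  -- uniqueness
  intro P hPpos hPbdd hPeq t ht
  have hPle : ∀ s u : ℝ, 0 ≤ s → s ≤ u → P s ≤ sSup (P '' Set.Icc 0 u) := fun s u hs hsu =>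
    le_csSup (hPbdd u (le_trans hs hsu)) ⟨s, ⟨hs, hsu⟩, rfl⟩
  have hPbarpos : ∀ u : ℝ, 0 ≤ u → 0 < sSup (P '' Set.Icc 0 u) := fun u hu =>
    lt_of_lt_of_le (hPpos u hu) (hPle u u hu le_rfl)
  have hPbarmono : ∀ s u : ℝ, 0 ≤ s → s ≤ u →
      sSup (P '' Set.Icc 0 s) ≤ sSup (P '' Set.Icc 0 u) := fun s u hs hsu =>
    csSup_le_csSup (hPbdd u (le_trans hs hsu)) ((Set.nonempty_Icc.mpr hs).image P)
      (Set.image_mono (Set.Icc_subset_Icc_right hsu))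
  -- the running supremum of P is hinv of the running supremum of X
  have hPbar : ∀ u : ℝ, 0 ≤ u →
      sSup (P '' Set.Icc 0 u) = hinv (sSup (X '' Set.Icc 0 u)) := by
    intro u hu
    -- upper bound: h (P s) ≤ X̄ u for every s ≤ u
    have hup : ∀ s, 0 ≤ s → s ≤ u → P s ≤ hinv (sSup (X '' Set.Icc 0 u)) := by
      intro s hs hsu
      have hPs := hPpos s hs
      have hPbars := hPbarpos s hs
      have hIle : Iop ι β γ c α lam Ψ (sSup (P '' Set.Icc 0 s)) ≤
          Iop ι β γ c α lam Ψ (P s) := hIanti _ _ hPs (hPle s s hs le_rfl)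
      have hhle : h (P s) ≤ sSup (X '' Set.Icc 0 u) := by
        rw [hh (P s) hPs, div_le_iff₀ (hIpos _ hPs)]
        calc (P s) ^ (1 + β) = X s * Iop ι β γ c α lam Ψ (sSup (P '' Set.Icc 0 s)) :=
              hPeq s hs
          _ ≤ sSup (X '' Set.Icc 0 u) * Iop ι β γ c α lam Ψ (P s) :=
              mul_le_mul (hXle s u hs hsu) hIle (hIpos _ hPbars).le
                (hXbarpos u hu).le
      calc P s = hinv (h (P s)) := (hinv_left (P s) hPs).symm
        _ ≤ hinv (sSup (X '' Set.Icc 0 u)) := hinvmono _ _ (hhpos (P s) hPs) hhle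
    refine le_antisymm (csSup_le ((Set.nonempty_Icc.mpr hu).image P) ?_) ?_
    · rintro _ ⟨s, hs, rfl⟩
      exact hup s hs.1 hs.2
    · -- lower bound
      set k := Iop ι β γ c α lam Ψ (sSup (P '' Set.Icc 0 u)) with hk
      have hkpos : 0 < k := hIpos _ (hPbarpos u hu)
      have hlow : (sSup (X '' Set.Icc 0 u) * k) ^ (1 / (1 + β)) ≤
          sSup (P '' Set.Icc 0 u) := by
        refine hsuplb u hu k hkpos _ ?_
        intro s hs hsu
        calc (X s * k) ^ (1 / (1 + β))
            ≤ (X s * Iop ι β γ c α lam Ψ (sSup (P '' Set.Icc 0 s))) ^ (1 / (1 + β)) := by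
              refine Real.rpow_le_rpow (mul_nonneg (hXpos s hs).le hkpos.le)
                (mul_le_mul_of_nonneg_left ?_ (hXpos s hs).le) (by positivity)
              rw [hk]
              exact hIanti _ _ (hPbarpos s hs) (hPbarmono s u hs hsu)
          _ = P s := by
              rw [← hPeq s hs, one_div, Real.rpow_rpow_inv (hPpos s hs).le h1β.ne']
          _ ≤ sSup (P '' Set.Icc 0 u) := hPle s u hs hsu
      -- deduce h (P̄ u) ≥ X̄ u
      have hpow : sSup (X '' Set.Icc 0 u) * k ≤ (sSup (P '' Set.Icc 0 u)) ^ (1 + β) := by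
        have := Real.rpow_le_rpow (Real.rpow_nonneg
          (mul_nonneg (hXbarpos u hu).le hkpos.le) _) hlow h1β.le
        rwa [one_div, Real.rpow_inv_rpow (mul_nonneg (hXbarpos u hu).le hkpos.le)
          h1β.ne'] at this
      have hhge : sSup (X '' Set.Icc 0 u) ≤ h (sSup (P '' Set.Icc 0 u)) := by
        rw [hh _ (hPbarpos u hu), le_div_iff₀ (hIpos _ (hPbarpos u hu))]
        exact hpow
      calc hinv (sSup (X '' Set.Icc 0 u))
          ≤ hinv (h (sSup (P '' Set.Icc 0 u))) :=
            hinvmono _ _ (hXbarpos u hu) hhge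
        _ = sSup (P '' Set.Icc 0 u) := hinv_left _ (hPbarpos u hu)
  -- conclude
  have hkey : (P t) ^ (1 + β) = (Pstar t) ^ (1 + β) := by
    rw [hPeq t ht, hPstarsat t ht, hPstarbar t ht, hPbar t ht]
  calc P t = ((P t) ^ (1 + β)) ^ (1 / (1 + β)) := by
        rw [one_div, Real.rpow_rpow_inv (hPpos t ht).le h1β.ne']
    _ = ((Pstar t) ^ (1 + β)) ^ (1 / (1 + β)) := by rw [hkey]
    _ = Pstar t := by
        rw [one_div, Real.rpow_rpow_inv (hPstarpos t ht).le h1β.ne']
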